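/- Let λ1, λ2 ≥ 0 be integers. Define Ψ on quadruples (a,b,c,d) of non-negative integers satisfying the Littelmann inequalities and the preatom condition for (λ1,λ2) by Ψ(a,b,c,d) = (a, b+1, c+1, d) if d = 0 or d = λ1, and Ψ(a,b,c,d) = (a, b, c+1, d+1) otherwise. Then Ψ is injective: if (a,b,c,d) and (a',b',c',d') both satisfy the Littelmann inequalities and the preatom condition for (λ1,λ2) and Ψ(a,b,c,d) = Ψ(a',b',c',d'), then (a,b,c,d) = (a',b',c',d'). -/

import Mathlib

/-- The Littelmann inequalities for (λ1,λ2) on a quadruple (a,b,c,d). -/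
def LittelmannIneq (l1 l2 a b c d : ℤ) : Prop :=
  b ≥ c ∧ c ≥ d ∧ d ≤ l1 ∧ c ≤ l2 + d ∧ b ≤ l1 - 2*d + 2*c ∧ a ≤ l2 + d - 2*c + b

/-- The preatom condition for (λ1,λ2) on a quadruple (a,b,c,d). -/
def PreatomCond (l1 _l2 b c d : ℤ) : Prop :=
  d = 0 ∨ d = l1 ∨ b = l1 - 2*d + 2*c

/-- The map Ψ on adapted strings realizing the embedding P(λ) → P(λ+ϖ2). -/
def PsiStr (l1 : ℤ) : ℤ × ℤ × ℤ × ℤ → ℤ × ℤ × ℤ × ℤ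
  | (a, b, c, d) =>
    if d = 0 ∨ d = l1 then (a, b + 1, c + 1, d) else (a, b, c + 1, d + 1)

/-- Ψ is injective on quadruples satisfying the Littelmann inequalities and the
preatom condition for (λ1,λ2). -/
theorem psi_injective (l1 l2 : ℤ) (hl1 : 0 ≤ l1) (hl2 : 0 ≤ l2)
    (a b c d a' b' c' d' : ℤ)
    (ha : 0 ≤ a) (hb : 0 ≤ b) (hc : 0 ≤ c) (hd : 0 ≤ d)
    (ha' : 0 ≤ a') (hb' : 0 ≤ b') (hc' : 0 ≤ c') (hd' : 0 ≤ d')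
    (hL : LittelmannIneq l1 l2 a b c d) (hP : PreatomCond l1 l2 b c d)
    (hL' : LittelmannIneq l1 l2 a' b' c' d') (hP' : PreatomCond l1 l2 b' c' d')
    (heq : PsiStr l1 (a, b, c, d) = PsiStr l1 (a', b', c', d')) :
    (a, b, c, d) = (a', b', c', d') := by
  obtain ⟨h1, h2, h3, h4, h5, h6⟩ := hL
  obtain ⟨h1', h2', h3', h4', h5', h6'⟩ := hL'
  simp only [PsiStr, Prod.mk.injEq] at heq ⊢
  by_cases hA : d = 0 ∨ d = l1 <;> by_cases hB : d' = 0 ∨ d' = l1 <;>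
    simp only [hA, hB, if_pos, if_neg, if_true, if_false, Prod.mk.injEq] at heq <;>
    rcases hP with hP | hP | hP <;> rcases hP' with hP' | hP' | hP' <;>
    omega
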